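/- Let θ > 0 and let ν_1 be a probability measure on ℝ^d with ∫_{|x|>2} log|x| ν_1(dx) < ∞. Let Z_1, Z_2, … ~ ν_1 i.i.d. and U_1, U_2, … ~ U(0,1) i.i.d., all independent. Then the series Σ_{i=1}^∞ Z_i (U_1 U_2 ⋯ U_i)^(1/θ) converges almost surely in ℝ^d. -/

import Mathlib

open MeasureTheory ProbabilityTheory Real
open scoped ENNReal

open Filter Finset Set


lemma aux_neg_log_integrable :
    Integrable (fun x => -Real.log x) (volume.restrict (Set.Ioo (0:ℝ) 1)) := by
  have hg : IntegrableOn (fun x : ℝ => 2 * x ^ (-2⁻¹ : ℝ)) (Set.Ioo (0:ℝ) 1) volume := by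
    have := (intervalIntegral.intervalIntegrable_rpow' (a := 0) (b := 1)
      (r := (-2⁻¹ : ℝ)) (by norm_num))
    rw [intervalIntegrable_iff_integrableOn_Ioo_of_le (by norm_num)] at this
    exact this.const_mul 2
  refine hg.integrable.mono ?_ ?_
  · exact (Real.measurable_log.neg).aestronglyMeasurable
  · filter_upwards [ae_restrict_mem measurableSet_Ioo] with x hx
    have hx0 : 0 < x := hx.1
    have h1 : -Real.log x ≤ 2 * x ^ (-2⁻¹ : ℝ) := by
      have h2 : Real.log (x ^ (-2⁻¹ : ℝ)) ≤ x ^ (-2⁻¹ : ℝ) - 1 :=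
        Real.log_le_sub_one_of_pos (Real.rpow_pos_of_pos hx0 _)
      rw [Real.log_rpow hx0] at h2
      nlinarith [Real.rpow_pos_of_pos hx0 (-2⁻¹ : ℝ)]
    have h0 : 0 ≤ -Real.log x := by
      simpa using Real.log_nonpos hx.1.le hx.2.le
    rw [Real.norm_eq_abs, Real.norm_eq_abs, abs_of_nonneg h0]
    exact h1.trans (le_abs_self _)

lemma aux_mean_pos :
    0 < ∫ x in Set.Ioo (0:ℝ) 1, -Real.log x := by
  rw [setIntegral_pos_iff_support_of_nonneg_ae]
  · have : Set.Ioo (0:ℝ) 1 ⊆ Function.support (fun x => -Real.log x) ∩ Set.Ioo 0 1 := by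
      intro x hx
      refine ⟨?_, hx⟩
      simp only [Function.mem_support, neg_ne_zero]
      exact ne_of_lt (Real.log_neg hx.1 hx.2)
    calc (0:ℝ≥0∞) < volume (Set.Ioo (0:ℝ) 1) := by simp
    _ ≤ _ := measure_mono this
  · filter_upwards [ae_restrict_mem measurableSet_Ioo] with x hx
    simpa using Real.log_nonpos hx.1.le hx.2.le
  · exact aux_neg_log_integrable


lemma aux_card_le {c : ℝ≥0∞} (s : Finset ℕ) (h : ∀ i ∈ s, ((i:ℝ≥0∞) + 1) ≤ c) :
    (s.card : ℝ≥0∞) ≤ c := by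
  rcases s.eq_empty_or_nonempty with rfl | hs
  · simp
  · have hmax := s.max'_mem hs
    have h1 : (s.max' hs : ℝ≥0∞) + 1 ≤ c := h _ hmax
    have h2 : s.card ≤ s.max' hs + 1 := by
      have : s ⊆ Finset.range (s.max' hs + 1) := by
        intro i hi
        exact Finset.mem_range.mpr (Nat.lt_succ_of_le (s.le_max' i hi))
      simpa using Finset.card_le_card this
    calc (s.card : ℝ≥0∞) ≤ ((s.max' hs + 1 : ℕ) : ℝ≥0∞) := by exact_mod_cast Nat.cast_le.mpr h2
    _ = (s.max' hs : ℝ≥0∞) + 1 := by push_cast; ring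
    _ ≤ c := h1

lemma aux_layercake {α : Type*} [MeasurableSpace α] (μ : Measure α)
    (g : α → ℝ≥0∞) (hg : Measurable g) :
    ∑' i : ℕ, μ {x | ((i:ℝ≥0∞) + 1) ≤ g x} ≤ ∫⁻ x, g x ∂μ := by
  have hms : ∀ i : ℕ, MeasurableSet {x | ((i:ℝ≥0∞) + 1) ≤ g x} :=
    fun i => hg measurableSet_Ici
  have h1 : ∀ i : ℕ, μ {x | ((i:ℝ≥0∞) + 1) ≤ g x}
      = ∫⁻ x, Set.indicator {x | ((i:ℝ≥0∞) + 1) ≤ g x} (fun _ => 1) x ∂μ := by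
    intro i; rw [lintegral_indicator (hms i)]; simp
  calc ∑' i : ℕ, μ {x | ((i:ℝ≥0∞) + 1) ≤ g x}
      = ∑' i : ℕ, ∫⁻ x, Set.indicator {x | ((i:ℝ≥0∞) + 1) ≤ g x} (fun _ => 1) x ∂μ := by
        simp_rw [h1]
    _ = ∫⁻ x, ∑' i : ℕ, Set.indicator {x | ((i:ℝ≥0∞) + 1) ≤ g x} (fun _ => 1) x ∂μ := by
        rw [lintegral_tsum]
        exact fun i => ((measurable_one.indicator (hms i))).aemeasurable
    _ ≤ ∫⁻ x, g x ∂μ := by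
        refine lintegral_mono fun x => ?_
        rw [ENNReal.tsum_eq_iSup_sum]
        refine iSup_le fun s => ?_
        classical
        have : ∑ i ∈ s, Set.indicator {x | ((i:ℝ≥0∞) + 1) ≤ g x} (fun _ => 1) x
            = ∑ i ∈ s.filter (fun i : ℕ => ((i:ℝ≥0∞) + 1) ≤ g x), (1:ℝ≥0∞) := by
          rw [Finset.sum_filter]
          refine Finset.sum_congr rfl fun i _ => ?_
          by_cases h : ((i:ℝ≥0∞) + 1) ≤ g x <;> simp [Set.indicator, h]
        rw [this, Finset.sum_const, nsmul_eq_mul, mul_one]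
        exact aux_card_le _ (fun i hi => (Finset.mem_filter.mp hi).2)

/-- Let `θ > 0` and `ν₁` a probability measure on `ℝ^d` with `∫_{‖x‖>2} log ‖x‖ ν₁(dx) < ∞`.
If `Z₁, Z₂, … ~ ν₁` i.i.d. and `U₁, U₂, … ~ U(0,1)` i.i.d., all mutually independent
(encoded as i.i.d. pairs `W i = (U i, Z i)` with product law), then the series
`Σ_i Z_i (U_1 ⋯ U_i)^(1/θ)` converges almost surely. -/
theorem stmt12 {d : ℕ} (θ : ℝ) (hθ : 0 < θ)
    (ν₁ : Measure (EuclideanSpace ℝ (Fin d))) [IsProbabilityMeasure ν₁]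
    (hlog : (∫⁻ x in {x : EuclideanSpace ℝ (Fin d) | 2 < ‖x‖},
        ENNReal.ofReal (Real.log ‖x‖) ∂ν₁) < ∞)
    {Ω : Type*} [MeasurableSpace Ω] (P : Measure Ω) [IsProbabilityMeasure P]
    (W : ℕ → Ω → ℝ × EuclideanSpace ℝ (Fin d)) (hWmeas : ∀ i, Measurable (W i))
    (hWindep : iIndepFun W P)
    (hWlaw : ∀ i, Measure.map (W i) P = (volume.restrict (Set.Ioo (0 : ℝ) 1)).prod ν₁) :
    ∀ᵐ ω ∂P, Summable (fun i : ℕ =>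
      ((∏ j ∈ Finset.range (i + 1), (W j ω).1) ^ (1 / θ)) • (W i ω).2) := by
  classical
  set μ₀ : ℝ := ∫ x in Set.Ioo (0:ℝ) 1, -Real.log x with hμ₀
  have hμ₀pos : 0 < μ₀ := aux_mean_pos
  set prodm : Measure (ℝ × EuclideanSpace ℝ (Fin d)) :=
    (volume.restrict (Set.Ioo (0 : ℝ) 1)).prod ν₁ with hprodm
  have hmapfst : Measure.map Prod.fst prodm = volume.restrict (Set.Ioo (0:ℝ) 1) := by
    rw [hprodm, Measure.map_fst_prod]; simp
  set f : ℝ × EuclideanSpace ℝ (Fin d) → ℝ := fun p => -Real.log p.1 with hf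
  have hfmeas : Measurable f := (Real.measurable_log.comp measurable_fst).neg
  set X : ℕ → Ω → ℝ := fun i ω => f (W i ω) with hX
  have hXmeas : ∀ i, Measurable (X i) := fun i => hfmeas.comp (hWmeas i)
  -- identically distributed
  have hident : ∀ i, IdentDistrib (X i) (X 0) P P := by
    intro i
    refine ⟨(hXmeas i).aemeasurable, (hXmeas 0).aemeasurable, ?_⟩
    have h1 : ∀ j, Measure.map (X j) P = Measure.map f prodm := by
      intro j
      rw [show X j = f ∘ W j from rfl,
        ← Measure.map_map hfmeas (hWmeas j), hWlaw j]
    rw [h1 i, h1 0]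
  have hindep : Pairwise (Function.onFun (IndepFun · · P) X) := by
    intro i j hij
    exact (hWindep.indepFun hij).comp hfmeas hfmeas
  have hintf : Integrable f prodm := by
    have h1 : Integrable (fun x : ℝ => -Real.log x)
        (Measure.map Prod.fst prodm) := by
      rw [hmapfst]; exact aux_neg_log_integrable
    have := (integrable_map_measure
      (Real.measurable_log.neg.aestronglyMeasurable) measurable_fst.aemeasurable).mp h1
    exact this
  have hint : Integrable (X 0) P := by
    have h1 : Integrable f (Measure.map (W 0) P) := by rw [hWlaw 0]; exact hintf
    exact (integrable_map_measure hfmeas.aestronglyMeasurable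
      (hWmeas 0).aemeasurable).mp h1
  have hmean : ∫ ω, X 0 ω ∂P = μ₀ := by
    calc ∫ ω, X 0 ω ∂P = ∫ p, f p ∂(Measure.map (W 0) P) :=
          (integral_map (hWmeas 0).aemeasurable hfmeas.aestronglyMeasurable).symm
    _ = ∫ p, f p ∂prodm := by rw [hWlaw 0]
    _ = ∫ x, -Real.log x ∂(Measure.map Prod.fst prodm) :=
          (integral_map measurable_fst.aemeasurable
            Real.measurable_log.neg.aestronglyMeasurable).symm
    _ = μ₀ := by rw [hmapfst]
  have hLLN := strong_law_ae_real X hint hindep hident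
  rw [hmean] at hLLN
  -- Borel-Cantelli for the Z's
  set ε : ℝ := μ₀ / (4 * θ) with hε
  have hεpos : 0 < ε := by positivity
  set S : Set (EuclideanSpace ℝ (Fin d)) := {x | 2 < ‖x‖} with hS
  have hSmeas : MeasurableSet S := measurableSet_lt measurable_const measurable_norm
  set g : EuclideanSpace ℝ (Fin d) → ℝ≥0∞ :=
    fun x => S.indicator (fun x => ENNReal.ofReal (Real.log ‖x‖ / ε)) x with hg
  have hgmeas : Measurable g :=
    (ENNReal.measurable_ofReal.comp
      ((Real.measurable_log.comp measurable_norm).div_const ε)).indicator hSmeas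
  have hgint : ∫⁻ x, g x ∂ν₁ < ∞ := by
    rw [hg, lintegral_indicator hSmeas]
    have h1 : ∀ᵐ x ∂(ν₁.restrict S), ENNReal.ofReal (Real.log ‖x‖ / ε)
        = ENNReal.ofReal ε⁻¹ * ENNReal.ofReal (Real.log ‖x‖) := by
      refine ae_of_all _ fun x => ?_
      rw [div_eq_inv_mul, ENNReal.ofReal_mul (by positivity)]
    rw [lintegral_congr_ae h1, lintegral_const_mul' _ _ ENNReal.ofReal_ne_top]
    exact ENNReal.mul_lt_top ENNReal.ofReal_lt_top hlog
  set A : ℕ → Set Ω := fun i => {ω | ((i:ℝ≥0∞) + 1) ≤ g ((W i ω).2)} with hA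
  have hmapsnd : ∀ i, Measure.map (fun ω => (W i ω).2) P = ν₁ := by
    intro i
    rw [show (fun ω => (W i ω).2) = Prod.snd ∘ W i from rfl,
      ← Measure.map_map measurable_snd (hWmeas i), hWlaw i, hprodm, Measure.map_snd_prod]
    simp [Real.volume_Ioo]
  have hPA : ∀ i, P (A i) = ν₁ {x | ((i:ℝ≥0∞) + 1) ≤ g x} := by
    intro i
    have hms : MeasurableSet {x | ((i:ℝ≥0∞) + 1) ≤ g x} :=
      measurableSet_le measurable_const hgmeas
    have : A i = (fun ω => (W i ω).2) ⁻¹' {x | ((i:ℝ≥0∞) + 1) ≤ g x} := rfl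
    rw [this, ← hmapsnd i]
    exact (Measure.map_apply (measurable_snd.comp (hWmeas i)) hms).symm
  have hsumA : ∑' i, P (A i) ≠ ∞ := by
    refine ne_of_lt (lt_of_le_of_lt ?_ hgint)
    calc ∑' i, P (A i) = ∑' i : ℕ, ν₁ {x | ((i:ℝ≥0∞) + 1) ≤ g x} := by
          exact tsum_congr hPA
    _ ≤ ∫⁻ x, g x ∂ν₁ := aux_layercake ν₁ g hgmeas
  have hBC := ae_eventually_notMem hsumA
  -- a.s. U's in (0,1)
  have hU : ∀ᵐ ω ∂P, ∀ i, (W i ω).1 ∈ Set.Ioo (0:ℝ) 1 := by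
    rw [ae_all_iff]
    intro i
    have hset : {ω | ¬ (W i ω).1 ∈ Set.Ioo (0:ℝ) 1}
        = W i ⁻¹' ((Set.Ioo (0:ℝ) 1)ᶜ ×ˢ Set.univ) := by
      ext ω; simp
    rw [ae_iff, hset, ← Measure.map_apply (hWmeas i)
      ((measurableSet_Ioo.compl).prod MeasurableSet.univ), hWlaw i, hprodm,
      Measure.prod_prod, Measure.restrict_apply measurableSet_Ioo.compl]
    simp
  -- combine
  filter_upwards [hLLN, hBC, hU] with ω hlln hbc hu
  set Sn : ℕ → ℝ := fun n => ∑ i ∈ Finset.range n, X i ω with hSn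
  -- eventual lower bound on Sn
  have hev1 : ∀ᶠ n in atTop, μ₀ / 2 < Sn n / n :=
    hlln.eventually_const_lt (by linarith)
  have hev2 : ∀ᶠ i : ℕ in atTop, 2 * ε * θ * ((i:ℝ) + 1) ≤ Sn (i + 1) := by
    obtain ⟨N, hN⟩ := eventually_atTop.mp hev1
    refine eventually_atTop.mpr ⟨N, fun i hi => ?_⟩
    have h1 := hN (i + 1) (by omega)
    have hn : (0:ℝ) < ((i+1 : ℕ) : ℝ) := by positivity
    rw [lt_div_iff₀ hn] at h1
    have h2ε : 2 * ε * θ = μ₀ / 2 := by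
      rw [hε]; field_simp; ring
    push_cast at h1
    nlinarith
  -- eventual upper bound on Z's
  have hev3 : ∀ᶠ i : ℕ in atTop, ‖(W i ω).2‖ ≤ 2 + Real.exp (ε * ((i:ℝ) + 1)) := by
    filter_upwards [hbc] with i hi
    by_cases h2 : ‖(W i ω).2‖ ≤ 2
    · have : (0:ℝ) ≤ Real.exp (ε * ((i:ℝ)+1)) := (Real.exp_pos _).le
      linarith
    · push_neg at h2
      have hmem : (W i ω).2 ∈ S := h2
      have hgval : g ((W i ω).2) = ENNReal.ofReal (Real.log ‖(W i ω).2‖ / ε) :=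
        Set.indicator_of_mem hmem _
      have hnot : ¬ ((i:ℝ≥0∞) + 1) ≤ g ((W i ω).2) := hi
      rw [hgval, not_le] at hnot
      have hcast : ((i:ℝ≥0∞) + 1) = ENNReal.ofReal ((i:ℝ) + 1) := by
        rw [ENNReal.ofReal_add (by positivity) (by norm_num)]
        simp
      rw [hcast, ENNReal.ofReal_lt_ofReal_iff (by positivity)] at hnot
      have hlog2 : Real.log ‖(W i ω).2‖ < ε * ((i:ℝ) + 1) := by
        rw [div_lt_iff₀ hεpos] at hnot; linarith [hnot]
      have hpos : (0:ℝ) < ‖(W i ω).2‖ := by linarith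
      have : ‖(W i ω).2‖ < Real.exp (ε * ((i:ℝ) + 1)) := by
        calc ‖(W i ω).2‖ = Real.exp (Real.log ‖(W i ω).2‖) := (Real.exp_log hpos).symm
        _ < Real.exp (ε * ((i:ℝ) + 1)) := Real.exp_lt_exp.mpr hlog2
      linarith
  -- summability
  set r : ℝ := Real.exp (-ε) with hr
  have hr0 : 0 < r := Real.exp_pos _
  have hr1 : r < 1 := Real.exp_lt_one_iff.mpr (by linarith)
  refine summable_of_isBigO_nat (summable_geometric_of_lt_one hr0.le hr1) ?_
  rw [Asymptotics.isBigO_iff]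
  refine ⟨3, ?_⟩
  filter_upwards [hev2, hev3] with i h2 h3
  have hUprod : ∏ j ∈ Finset.range (i + 1), (W j ω).1 = Real.exp (-(Sn (i+1))) := by
    have heach : ∀ j ∈ Finset.range (i+1), (W j ω).1
        = Real.exp (Real.log ((W j ω).1)) := fun j _ => (Real.exp_log (hu j).1).symm
    rw [Finset.prod_congr rfl heach, ← Real.exp_sum]
    congr 1
    rw [hSn]
    simp [hX, hf]
  have hrpow : (Real.exp (-(Sn (i+1)))) ^ (1/θ) = Real.exp (-(Sn (i+1)) * (1/θ)) := by
    rw [← Real.exp_log (Real.exp_pos (-(Sn (i+1)))), Real.log_exp,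
      Real.rpow_def_of_pos (Real.exp_pos _), Real.log_exp]
  have hnorm : ‖((∏ j ∈ Finset.range (i + 1), (W j ω).1) ^ (1 / θ)) • (W i ω).2‖
      = Real.exp (-(Sn (i+1)) * (1/θ)) * ‖(W i ω).2‖ := by
    rw [hUprod, hrpow, norm_smul, Real.norm_eq_abs, abs_of_pos (Real.exp_pos _)]
  rw [hnorm]
  -- exponent bound
  set m : ℝ := (i:ℝ) + 1 with hmdef
  have hm : (0:ℝ) ≤ m := by positivity
  have h1θ : (0:ℝ) < 1/θ := by positivity
  have hexp1 : -(Sn (i+1)) * (1/θ) ≤ -(2 * ε * m) := by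
    have hmul := mul_le_mul_of_nonneg_right h2 h1θ.le
    have hid : 2 * ε * θ * m * (1/θ) = 2 * ε * m := by field_simp
    nlinarith
  have hstep1 : Real.exp (-(Sn (i+1)) * (1/θ)) ≤ Real.exp (-(2*ε*m)) :=
    Real.exp_le_exp.mpr hexp1
  have hεm : 0 ≤ ε * m := by positivity
  calc Real.exp (-(Sn (i+1)) * (1/θ)) * ‖(W i ω).2‖
      ≤ Real.exp (-(2*ε*m)) * (2 + Real.exp (ε*m)) :=
        mul_le_mul hstep1 h3 (norm_nonneg _) (Real.exp_pos _).le
    _ ≤ 3 * Real.exp (-(ε*m)) := by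
        have e1 : Real.exp (-(2*ε*m)) ≤ Real.exp (-(ε*m)) :=
          Real.exp_le_exp.mpr (by linarith)
        have e2 : Real.exp (-(2*ε*m)) * Real.exp (ε*m) = Real.exp (-(ε*m)) := by
          rw [← Real.exp_add]; congr 1; ring
        rw [mul_add]
        linarith [e1, e2]
    _ ≤ 3 * Real.exp (-(ε*(i:ℝ))) := by
        have hεm2 : ε * m = ε * (i:ℝ) + ε := by rw [hmdef]; ring
        have : Real.exp (-(ε*m)) ≤ Real.exp (-(ε*(i:ℝ))) :=
          Real.exp_le_exp.mpr (by linarith [hεpos.le])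
        linarith
    _ = 3 * ‖r ^ i‖ := by
        rw [Real.norm_eq_abs, abs_of_pos (pow_pos hr0 i), hr, ← Real.exp_nat_mul]
        congr 1; ring
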